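/- Quantum lower Bogoliubov bound: Tr(ρ U) ≤ ΔF, where ρ = e^{−βH}/Tr(e^{−βH}), U = H − H₀, and ΔF = −β⁻¹ log(Z/Z₀). -/

import Mathlib

open Matrix

lemma herm_smul {n : ℕ} (c : ℝ) {A : Matrix (Fin n) (Fin n) ℂ} (hA : A.IsHermitian) :
    (((c:ℝ):ℂ) • A).IsHermitian := by
  unfold Matrix.IsHermitian
  rw [conjTranspose_smul, hA.eq, Complex.star_def, Complex.conj_ofReal]

lemma herm_exp_eq {n : ℕ} {A : Matrix (Fin n) (Fin n) ℂ} (hA : A.IsHermitian) :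
    NormedSpace.exp A = (hA.eigenvectorUnitary : Matrix (Fin n) (Fin n) ℂ) *
      diagonal (fun i => ((Real.exp (hA.eigenvalues i) : ℝ) : ℂ)) *
      star (hA.eigenvectorUnitary : Matrix (Fin n) (Fin n) ℂ) := by
  set V := (hA.eigenvectorUnitary : Matrix (Fin n) (Fin n) ℂ) with hV
  have hconj : NormedSpace.exp (V * diagonal (RCLike.ofReal ∘ hA.eigenvalues) * star V)
      = V * NormedSpace.exp (diagonal (RCLike.ofReal ∘ hA.eigenvalues)) * star V :=
    Matrix.exp_units_conj (Unitary.toUnits hA.eigenvectorUnitary)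
      (diagonal (RCLike.ofReal ∘ hA.eigenvalues))
  conv_lhs => rw [hA.spectral_theorem, Unitary.conjStarAlgAut_apply, ← hV]
  have hd : NormedSpace.exp (RCLike.ofReal ∘ hA.eigenvalues : Fin n → ℂ)
      = fun i => ((Real.exp (hA.eigenvalues i) : ℝ) : ℂ) := by
    funext i
    rw [Pi.exp_def]
    show NormedSpace.exp ((hA.eigenvalues i : ℝ) : ℂ) = ((Real.exp (hA.eigenvalues i) : ℝ) : ℂ)
    rw [← Complex.exp_eq_exp_ℂ, ← Complex.ofReal_exp]
  rw [hconj, Matrix.exp_diagonal, hd]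

lemma jensen_exp {ι : Type*} [Fintype ι] (w x : ι → ℝ) (h0 : ∀ i, 0 ≤ w i)
    (h1 : ∑ i, w i = 1) : Real.exp (∑ i, w i * x i) ≤ ∑ i, w i * Real.exp (x i) := by
  have := convexOn_exp.map_sum_le (t := Finset.univ) (w := w) (p := x)
    (fun i _ => h0 i) h1 (fun i _ => Set.mem_univ (x i))
  simpa [smul_eq_mul] using this

lemma conj_diag_entry {n : ℕ} (Q : Matrix (Fin n) (Fin n) ℂ) (d : Fin n → ℝ) (i : Fin n) :
    (Q * diagonal (fun j => ((d j : ℝ) : ℂ)) * star Q) i i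
      = ((∑ j, Complex.normSq (Q i j) * d j : ℝ) : ℂ) := by
  rw [Matrix.mul_apply]
  push_cast
  refine Finset.sum_congr rfl fun k _ => ?_
  rw [Matrix.mul_diagonal, Matrix.star_apply]
  have : Q i k * ((d k : ℝ) : ℂ) * star (Q i k) = (Q i k * star (Q i k)) * ((d k : ℝ) : ℂ) := by
    ring
  rw [this, Complex.star_def, Complex.mul_conj]

/-- Quantum lower Bogoliubov bound: `Tr(ρ U) ≤ ΔF = −β⁻¹ log(Z/Z₀)`, where
`ρ = e^{−βH}/Tr(e^{−βH})` and `U = H − H₀`. -/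
theorem quantum_bogoliubov_lower {m : ℕ} (β : ℝ) (hβ : 0 < β)
    (H H₀ U : Matrix (Fin m) (Fin m) ℂ)
    (hH : H.IsHermitian) (hH₀ : H₀.IsHermitian) (hU : U = H - H₀)
    (Z Z₀ : ℝ)
    (hZ : Z = (NormedSpace.exp (((-β : ℝ) : ℂ) • H)).trace.re)
    (hZ₀ : Z₀ = (NormedSpace.exp (((-β : ℝ) : ℂ) • H₀)).trace.re)
    (ρ : Matrix (Fin m) (Fin m) ℂ)
    (hρ : ρ = ((Z : ℂ))⁻¹ • NormedSpace.exp (((-β : ℝ) : ℂ) • H)) :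
    ((ρ * U).trace).re ≤ -β⁻¹ * Real.log (Z / Z₀) := by
  rcases Nat.eq_zero_or_pos m with hm | hm
  · subst hm
    have h1 : (ρ * U).trace = 0 := by simp [Matrix.trace]
    have h2 : Z = 0 := by simp [hZ, Matrix.trace]
    have h3 : Z₀ = 0 := by simp [hZ₀, Matrix.trace]
    rw [h1, h2, h3]
    simp
  haveI : Nonempty (Fin m) := ⟨⟨0, hm⟩⟩
  set A := ((-β : ℝ) : ℂ) • H with hAdef
  set B := ((-β : ℝ) : ℂ) • H₀ with hBdef
  have hA : A.IsHermitian := herm_smul _ hH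
  have hB : B.IsHermitian := herm_smul _ hH₀
  set V := (hA.eigenvectorUnitary : Matrix (Fin m) (Fin m) ℂ) with hVdef
  set W := (hB.eigenvectorUnitary : Matrix (Fin m) (Fin m) ℂ) with hWdef
  set a := hA.eigenvalues with hadef
  set b := hB.eigenvalues with hbdef
  have hVV : star V * V = 1 := (Matrix.mem_unitaryGroup_iff').mp hA.eigenvectorUnitary.2
  have hVV' : V * star V = 1 := (Matrix.mem_unitaryGroup_iff).mp hA.eigenvectorUnitary.2
  have hWW'_sym : star W * W = 1 := (Matrix.mem_unitaryGroup_iff').mp hB.eigenvectorUnitary.2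
  have hWW' : W * star W = 1 := (Matrix.mem_unitaryGroup_iff).mp hB.eigenvectorUnitary.2
  have hexpA : NormedSpace.exp A
      = V * diagonal (fun i => ((Real.exp (a i) : ℝ) : ℂ)) * star V := herm_exp_eq hA
  have hexpB : NormedSpace.exp B
      = W * diagonal (fun j => ((Real.exp (b j) : ℝ) : ℂ)) * star W := herm_exp_eq hB
  -- Z and Z₀ as sums of exponentials of eigenvalues
  have hZeq : Z = ∑ i, Real.exp (a i) := by
    rw [hZ, hexpA, Matrix.trace_mul_cycle, hVV, Matrix.one_mul, Matrix.trace_diagonal,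
      Complex.re_sum]
    simp [Complex.exp_ofReal_re]
  have hZ₀eq : Z₀ = ∑ j, Real.exp (b j) := by
    rw [hZ₀, hexpB, Matrix.trace_mul_cycle, hWW'_sym, Matrix.one_mul, Matrix.trace_diagonal,
      Complex.re_sum]
    simp [Complex.exp_ofReal_re]
  have hZpos : 0 < Z := by
    rw [hZeq]; exact Finset.sum_pos (fun i _ => Real.exp_pos _) Finset.univ_nonempty
  have hZ₀pos : 0 < Z₀ := by
    rw [hZ₀eq]; exact Finset.sum_pos (fun j _ => Real.exp_pos _) Finset.univ_nonempty
  -- M = V* U V and its real diagonal entries c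
  set M := star V * U * V with hMdef
  have hUherm : U.IsHermitian := hU ▸ hH.sub hH₀
  have hMH : M.IsHermitian := by
    unfold Matrix.IsHermitian
    rw [hMdef, Matrix.conjTranspose_mul, Matrix.conjTranspose_mul]
    simp [hUherm.eq, Matrix.mul_assoc, Matrix.star_eq_conjTranspose,
      Matrix.conjTranspose_conjTranspose]
  set c := fun i => (M i i).re with hcdef
  have hMc : ∀ i, M i i = ((c i : ℝ) : ℂ) := by
    intro i
    have h : Mᴴ i i = M i i := by rw [hMH.eq]
    rw [Matrix.conjTranspose_apply] at h
    exact (Complex.conj_eq_iff_re.mp h).symm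
  -- trace of ρU
  have hT : ((ρ * U).trace).re = Z⁻¹ * ∑ i, Real.exp (a i) * c i := by
    have h1 : (NormedSpace.exp A * U).trace
        = ((∑ i, Real.exp (a i) * c i : ℝ) : ℂ) := by
      rw [hexpA]
      have : V * diagonal (fun i => ((Real.exp (a i) : ℝ) : ℂ)) * star V * U
          = V * (diagonal (fun i => ((Real.exp (a i) : ℝ) : ℂ)) * (star V * U)) := by
        simp [Matrix.mul_assoc]
      rw [this, Matrix.trace_mul_comm]
      have hMM : star V * (U * V) = M := by rw [hMdef, Matrix.mul_assoc]
      rw [Matrix.mul_assoc, Matrix.mul_assoc, hMM, Matrix.trace]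
      push_cast
      exact Finset.sum_congr rfl fun i _ => by
        rw [Matrix.diag_apply, Matrix.diagonal_mul, hMc i]
    rw [hρ, Matrix.smul_mul, Matrix.trace_smul, h1]
    rw [smul_eq_mul, ← Complex.ofReal_inv, ← Complex.ofReal_mul, Complex.ofReal_re]
  -- Q = V* W and the weight matrix
  have hofReal : ∀ x : ℝ, (RCLike.ofReal x : ℂ) = ((x : ℝ) : ℂ) := fun x => rfl
  set Q := star V * W with hQdef
  have hQQ : Q * star Q = 1 := by
    rw [hQdef, StarMul.star_mul, star_star]
    calc star V * W * (star W * V) = star V * (W * star W) * V := by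
          simp [Matrix.mul_assoc]
      _ = 1 := by rw [hWW', Matrix.mul_one, hVV]
  set w := fun i j => Complex.normSq (Q i j) with hwdef
  have hw0 : ∀ i j, 0 ≤ w i j := fun i j => Complex.normSq_nonneg _
  have hrow : ∀ i, ∑ j, w i j = 1 := by
    intro i
    have h : (Q * star Q) i i = (1 : Matrix (Fin m) (Fin m) ℂ) i i := by rw [hQQ]
    rw [Matrix.mul_apply] at h
    have h2 : ∀ j, Q i j * star Q j i = ((w i j : ℝ) : ℂ) := by
      intro j
      rw [Matrix.star_apply, Complex.star_def, Complex.mul_conj]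
    rw [Finset.sum_congr rfl fun j _ => h2 j, Matrix.one_apply_eq] at h
    exact_mod_cast h
  -- relation B = A + β U and diagonal entries
  have hBA : B = A + ((β : ℝ) : ℂ) • U := by
    rw [hU, hAdef, hBdef, smul_sub]
    push_cast
    module
  have hNdiag : star V * B * V = diagonal (RCLike.ofReal ∘ a) + ((β : ℝ) : ℂ) • M := by
    rw [hBA, Matrix.mul_add, Matrix.add_mul, (by simpa using hA.conjStarAlgAut_star_eigenvectorUnitary :
      star V * A * V = diagonal (RCLike.ofReal ∘ a))]
    refine congrArg (diagonal (RCLike.ofReal ∘ a) + ·) ?_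
    rw [Matrix.mul_smul, Matrix.smul_mul]
  have hNQ : star V * B * V = Q * diagonal (fun j => ((b j : ℝ) : ℂ)) * star Q := by
    conv_lhs => rw [hB.spectral_theorem, Unitary.conjStarAlgAut_apply]
    rw [hQdef, StarMul.star_mul, star_star]
    simp only [Matrix.mul_assoc]
    rfl
  have hsum : ∀ i, a i + β * c i = ∑ j, w i j * b j := by
    intro i
    have h1 : (star V * B * V) i i = ((a i + β * c i : ℝ) : ℂ) := by
      rw [hNdiag, Matrix.add_apply, Matrix.diagonal_apply_eq, Matrix.smul_apply, hMc i,
        smul_eq_mul]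
      rw [Function.comp_apply, hofReal]
      push_cast
      ring
    have h2 : (star V * B * V) i i = ((∑ j, w i j * b j : ℝ) : ℂ) := by
      rw [hNQ]; exact conj_diag_entry Q b i
    exact_mod_cast h1.symm.trans h2
  -- Peierls inequality via the conjugated exponential
  have hPentry : ∀ i, (star V * NormedSpace.exp B * V) i i
      = ((∑ j, w i j * Real.exp (b j) : ℝ) : ℂ) := by
    intro i
    rw [hexpB]
    have h3 : star V * (W * diagonal (fun j => ((Real.exp (b j) : ℝ) : ℂ)) * star W) * V
        = Q * diagonal (fun j => ((Real.exp (b j) : ℝ) : ℂ)) * star Q := by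
      rw [hQdef, StarMul.star_mul, star_star]
      simp [Matrix.mul_assoc]
    rw [h3]
    exact conj_diag_entry Q (fun j => Real.exp (b j)) i
  have hZ₀eq2 : Z₀ = ∑ i, ∑ j, w i j * Real.exp (b j) := by
    have htr : (star V * NormedSpace.exp B * V).trace = (NormedSpace.exp B).trace := by
      rw [Matrix.trace_mul_cycle, hVV', Matrix.one_mul]
    rw [hZ₀, ← htr, Matrix.trace, Complex.re_sum]
    refine Finset.sum_congr rfl fun i _ => ?_
    rw [Matrix.diag_apply, hPentry i, Complex.ofReal_re]
  have hpeierls : ∑ i, Real.exp (a i + β * c i) ≤ Z₀ := by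
    rw [hZ₀eq2]
    refine Finset.sum_le_sum fun i _ => ?_
    rw [hsum i]
    exact jensen_exp (w i) b (hw0 i) (hrow i)
  -- second Jensen with the Gibbs weights
  set p := fun i => Real.exp (a i) / Z with hpdef
  have hp0 : ∀ i, 0 ≤ p i := fun i => div_nonneg (Real.exp_pos _).le hZpos.le
  have hp1 : ∑ i, p i = 1 := by
    simp only [hpdef]
    rw [← Finset.sum_div, ← hZeq, div_self hZpos.ne']
  have hj2 : Real.exp (∑ i, p i * (β * c i)) ≤ ∑ i, p i * Real.exp (β * c i) :=
    jensen_exp p (fun i => β * c i) hp0 hp1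
  have hE1 : ∑ i, p i * Real.exp (β * c i) = Z⁻¹ * ∑ i, Real.exp (a i + β * c i) := by
    rw [Finset.mul_sum]
    refine Finset.sum_congr rfl fun i _ => ?_
    simp only [hpdef]
    rw [Real.exp_add]
    ring
  have hE2 : ∑ i, p i * (β * c i) = β * ((ρ * U).trace).re := by
    rw [hT, ← mul_assoc, Finset.mul_sum]
    refine Finset.sum_congr rfl fun i _ => ?_
    simp only [hpdef]
    ring
  have hfinal : Real.exp (β * ((ρ * U).trace).re) ≤ Z₀ / Z := by
    rw [← hE2]
    calc Real.exp (∑ i, p i * (β * c i)) ≤ ∑ i, p i * Real.exp (β * c i) := hj2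
      _ = Z⁻¹ * ∑ i, Real.exp (a i + β * c i) := hE1
      _ ≤ Z⁻¹ * Z₀ := mul_le_mul_of_nonneg_left hpeierls (inv_nonneg.mpr hZpos.le)
      _ = Z₀ / Z := by rw [inv_mul_eq_div]
  have hlog : β * ((ρ * U).trace).re ≤ Real.log (Z₀ / Z) :=
    (Real.le_log_iff_exp_le (div_pos hZ₀pos hZpos)).2 hfinal
  have hflip : -β⁻¹ * Real.log (Z / Z₀) = β⁻¹ * Real.log (Z₀ / Z) := by
    rw [Real.log_div hZpos.ne' hZ₀pos.ne', Real.log_div hZ₀pos.ne' hZpos.ne']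
    ring
  rw [hflip, inv_mul_eq_div, le_div_iff₀ hβ]
  linarith [hlog]
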